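/- The function t ↦ (1 - e^{-t})·t / (e^{-t} - 1 + t) is strictly decreasing on (0, +∞), tends to 2 as t → 0⁺, and tends to 1 as t → +∞. -/

import Mathlib

open Real Set Filter Topology

/-- denominator positivity -/
lemma den_pos {t : ℝ} (ht : 0 < t) : 0 < Real.exp (-t) - 1 + t := by
  have := Real.add_one_lt_exp (x := -t) (by linarith : (-t : ℝ) ≠ 0)
  linarith

lemma num_pos {t : ℝ} (ht : 0 < t) : 0 < 1 - Real.exp (-t) := by
  have : Real.exp (-t) < Real.exp 0 := Real.exp_lt_exp.mpr (by linarith)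
  simpa [Real.exp_zero] using this

/-- key inequality: t * e^{-t/2} < 1 - e^{-t} for t > 0 -/
lemma key_ineq {t : ℝ} (ht : 0 < t) : t * Real.exp (-t / 2) < 1 - Real.exp (-t) := by
  have h1 : t / 2 < Real.sinh (t / 2) := Real.self_lt_sinh_iff.mpr (by linarith)
  rw [Real.sinh_eq] at h1
  have h2 : t < Real.exp (t / 2) - Real.exp (-(t / 2)) := by linarith
  have he : (0:ℝ) < Real.exp (-t / 2) := Real.exp_pos _
  have h3 := mul_lt_mul_of_pos_right h2 he
  have e1 : Real.exp (t / 2) * Real.exp (-t / 2) = 1 := by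
    rw [← Real.exp_add, show t / 2 + -t / 2 = 0 by ring, Real.exp_zero]
  have e2 : Real.exp (-(t / 2)) * Real.exp (-t / 2) = Real.exp (-t) := by
    rw [← Real.exp_add, show -(t / 2) + -t / 2 = -t by ring]
  calc t * Real.exp (-t / 2)
      < (Real.exp (t / 2) - Real.exp (-(t / 2))) * Real.exp (-t / 2) := h3
    _ = 1 - Real.exp (-t) := by rw [sub_mul, e1, e2]

noncomputable def g (t : ℝ) : ℝ := (1 - Real.exp (-t))⁻¹ - t⁻¹

lemma g_hasDeriv {t : ℝ} (ht : 0 < t) :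
    HasDerivAt g (-(Real.exp (-t)) / (1 - Real.exp (-t)) ^ 2 - (-1 / t ^ 2)) t := by
  have h1 : HasDerivAt (fun t : ℝ => 1 - Real.exp (-t)) (Real.exp (-t)) t := by
    have : HasDerivAt (fun t : ℝ => Real.exp (-t)) (Real.exp (-t) * (-1)) t :=
      (Real.hasDerivAt_exp (-t)).comp t (hasDerivAt_neg t)
    simpa [Pi.sub_def] using (hasDerivAt_const t (1:ℝ)).sub this
  have h2 : HasDerivAt (fun t : ℝ => (1 - Real.exp (-t))⁻¹)
      (-(Real.exp (-t)) / (1 - Real.exp (-t)) ^ 2) t := h1.inv (num_pos ht).ne'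
  have h3 : HasDerivAt (fun t : ℝ => t⁻¹) (-1 / t ^ 2) t := by
    simpa [Pi.inv_def] using (hasDerivAt_id t).inv ht.ne'
  exact h2.sub h3

lemma g_deriv_pos {t : ℝ} (ht : 0 < t) :
    0 < -(Real.exp (-t)) / (1 - Real.exp (-t)) ^ 2 - (-1 / t ^ 2) := by
  have hn := num_pos ht
  have hkey := key_ineq ht
  have he : (0:ℝ) < Real.exp (-t) := Real.exp_pos _
  have hsq : t ^ 2 * Real.exp (-t) < (1 - Real.exp (-t)) ^ 2 := by
    have h0 : 0 ≤ t * Real.exp (-t / 2) := by positivity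
    have := mul_self_lt_mul_self h0 hkey
    have ee : Real.exp (-t / 2) * Real.exp (-t / 2) = Real.exp (-t) := by
      rw [← Real.exp_add, show -t / 2 + -t / 2 = -t by ring]
    calc t ^ 2 * Real.exp (-t) = (t * Real.exp (-t / 2)) * (t * Real.exp (-t / 2)) := by
          rw [← ee]; ring
      _ < (1 - Real.exp (-t)) * (1 - Real.exp (-t)) := this
      _ = (1 - Real.exp (-t)) ^ 2 := by ring
  have h4 : Real.exp (-t) / (1 - Real.exp (-t)) ^ 2 < 1 / t ^ 2 := by
    rw [div_lt_div_iff₀ (by positivity) (by positivity)]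
    linarith [hsq]
  have : -(Real.exp (-t)) / (1 - Real.exp (-t)) ^ 2 = -(Real.exp (-t) / (1 - Real.exp (-t)) ^ 2) := by ring
  rw [this]
  have h5 : (-1:ℝ) / t ^ 2 = -(1 / t ^ 2) := by ring
  rw [h5]
  linarith

lemma g_mono : StrictMonoOn g (Set.Ioi (0:ℝ)) := by
  have hderiv : ∀ t ∈ interior (Set.Ioi (0:ℝ)), 0 < deriv g t := by
    rw [interior_Ioi]
    intro t ht
    rw [(g_hasDeriv ht).deriv]
    exact g_deriv_pos ht
  exact strictMonoOn_of_deriv_pos (convex_Ioi 0)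
    (fun t ht => ((g_hasDeriv (by simpa using ht)).differentiableAt.continuousAt).continuousWithinAt)
    hderiv

lemma g_eq {t : ℝ} (ht : 0 < t) :
    g t = (Real.exp (-t) - 1 + t) / ((1 - Real.exp (-t)) * t) := by
  have hn := num_pos ht
  unfold g
  field_simp
  ring

lemma g_pos {t : ℝ} (ht : 0 < t) : 0 < g t := by
  rw [g_eq ht]
  exact div_pos (den_pos ht) (mul_pos (num_pos ht) ht)

lemma f_eq_inv_g (f : ℝ → ℝ)
    (hf : ∀ t, f t = (1 - Real.exp (-t)) * t / (Real.exp (-t) - 1 + t))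
    {t : ℝ} (ht : 0 < t) : f t = (g t)⁻¹ := by
  rw [hf, g_eq ht]
  rw [inv_div]

theorem stmt_2 (f : ℝ → ℝ)
    (hf : ∀ t, f t = (1 - Real.exp (-t)) * t / (Real.exp (-t) - 1 + t)) :
    StrictAntiOn f (Set.Ioi (0:ℝ)) ∧
    Filter.Tendsto f (nhdsWithin 0 (Set.Ioi 0)) (nhds 2) ∧
    Filter.Tendsto f Filter.atTop (nhds 1) := by
  refine ⟨?_, ?_, ?_⟩
  · -- strict anti
    intro a ha b hb hab
    rw [f_eq_inv_g f hf (by simpa using hb), f_eq_inv_g f hf (by simpa using ha)]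
    have h1 : g a < g b := g_mono ha hb hab
    have h2 : 0 < g a := g_pos (by simpa using ha)
    exact inv_strictAnti₀ h2 h1
  · -- limit at 0+
    -- (1 - e^{-t})/t → 1
    have hL1 : Tendsto (fun t => (1 - Real.exp (-t)) / t) (𝓝[>] (0:ℝ)) (𝓝 1) := by
      have h1 : HasDerivAt (fun t : ℝ => 1 - Real.exp (-t)) 1 0 := by
        have : HasDerivAt (fun t : ℝ => Real.exp (-t)) (Real.exp (-(0:ℝ)) * (-1)) 0 :=
          (Real.hasDerivAt_exp (-(0:ℝ))).comp 0 (hasDerivAt_neg 0)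
        simpa [Pi.sub_def] using (hasDerivAt_const (0:ℝ) (1:ℝ)).sub this
      have := hasDerivAt_iff_tendsto_slope.mp h1
      have h2 := this.mono_left (nhdsWithin_mono _ (by intro x hx; rw [Set.mem_Ioi] at hx; simp only [Set.mem_compl_iff, Set.mem_singleton_iff]; exact hx.ne'))
      refine h2.congr' ?_
      filter_upwards [self_mem_nhdsWithin] with x hx
      rw [Set.mem_Ioi] at hx
      rw [slope_def_field]
      simp [Real.exp_zero]
    -- (e^{-t} - 1 + t)/t² → 1/2 via L'Hôpital
    have hL2 : Tendsto (fun t => (Real.exp (-t) - 1 + t) / t ^ 2) (𝓝[>] (0:ℝ)) (𝓝 (1/2)) := by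
      apply HasDerivAt.lhopital_zero_right_on_Ioo (a := 0) (b := 1)
        (f' := fun t => 1 - Real.exp (-t)) (g' := fun t => 2 * t) one_pos
      · intro x hx
        have h1 : HasDerivAt (fun t : ℝ => Real.exp (-t)) (Real.exp (-x) * (-1)) x :=
          (Real.hasDerivAt_exp (-x)).comp x (hasDerivAt_neg x)
        have h2 : (1 : ℝ) - Real.exp (-x) = Real.exp (-x) * (-1) + 1 := by ring
        rw [h2]
        exact (h1.sub_const 1).add (hasDerivAt_id x)
      · intro x hx
        simpa using (hasDerivAt_pow 2 x)
      · intro x hx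
        have := hx.1; positivity
      · have hc : Continuous (fun t : ℝ => Real.exp (-t) - 1 + t) := by fun_prop
        have h := (hc.tendsto 0).mono_left (nhdsWithin_le_nhds (s := Set.Ioi 0))
        simpa using h
      · have hc : Continuous (fun t : ℝ => t ^ 2) := by fun_prop
        have h := (hc.tendsto 0).mono_left (nhdsWithin_le_nhds (s := Set.Ioi 0))
        simpa using h
      · have : Tendsto (fun t => (1 - Real.exp (-t)) / t * (1/2)) (𝓝[>] (0:ℝ)) (𝓝 (1 * (1/2))) :=
          hL1.mul tendsto_const_nhds
        rw [one_mul] at this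
        refine this.congr' ?_
        filter_upwards [self_mem_nhdsWithin] with x hx
        rw [Set.mem_Ioi] at hx
        rw [div_mul_div_comm, mul_one]
        ring_nf
    have hdiv : Tendsto (fun t => ((1 - Real.exp (-t)) / t) / ((Real.exp (-t) - 1 + t) / t ^ 2))
        (𝓝[>] (0:ℝ)) (𝓝 (1 / (1/2))) := hL1.div hL2 (by norm_num)
    norm_num at hdiv
    refine hdiv.congr' ?_
    filter_upwards [self_mem_nhdsWithin] with t ht
    rw [Set.mem_Ioi] at ht
    rw [hf]
    have hd := (den_pos ht).ne'
    rw [div_div_div_comm]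
    field_simp
  · -- limit at infinity
    have he0 : Tendsto (fun t : ℝ => Real.exp (-t)) atTop (𝓝 0) := by
      exact Real.tendsto_exp_atBot.comp tendsto_neg_atTop_atBot
    have hnum : Tendsto (fun t : ℝ => 1 - Real.exp (-t)) atTop (𝓝 1) := by
      simpa using (tendsto_const_nhds (x := (1:ℝ))).sub he0
    have hfrac : Tendsto (fun t : ℝ => (Real.exp (-t) - 1) / t) atTop (𝓝 0) := by
      apply Tendsto.div_atTop (l := atTop) (a := (0:ℝ) - 1) ?_ tendsto_id
      exact he0.sub tendsto_const_nhds
    have hden : Tendsto (fun t : ℝ => (Real.exp (-t) - 1) / t + 1) atTop (𝓝 1) := by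
      simpa using hfrac.add (tendsto_const_nhds (x := (1:ℝ)))
    have hmain : Tendsto (fun t : ℝ => (1 - Real.exp (-t)) / ((Real.exp (-t) - 1) / t + 1))
        atTop (𝓝 1) := by
      simpa [Pi.div_def] using hnum.div hden one_ne_zero
    refine hmain.congr' ?_
    filter_upwards [eventually_gt_atTop (0:ℝ)] with t ht
    rw [hf]
    have hrw : (Real.exp (-t) - 1) / t + 1 = (Real.exp (-t) - 1 + t) / t := by
      field_simp
    rw [hrw, div_div_eq_mul_div]
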